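/- Let p be a prime and let K be a finite extension of ℚ_p with ramification index e. If p − 1 does not divide e, then 1 is the only p-th root of unity in K; that is, any x ∈ K with x^p = 1 satisfies x = 1. -/

import Mathlib

set_option maxHeartbeats 1000000
set_option synthInstance.maxHeartbeats 400000

open Ideal UniqueFactorizationMonoid

section Aux

variable {O : Type*} [CommRing O] [IsDomain O]

/-- In a domain, if `ζ` is a primitive `p`-th root of unity for `p` prime,
then `p` is associated to `(ζ - 1) ^ (p - 1)`. -/
lemma assoc_aux {p : ℕ} (hp : p.Prime) {ζ : O} (hζ : IsPrimitiveRoot ζ p) :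
    Associated ((p : ℕ) : O) ((ζ - 1) ^ (p - 1)) := by
  obtain ⟨n, rfl⟩ : ∃ n, p = n + 1 := ⟨p - 1, (Nat.succ_pred_eq_of_pos hp.pos).symm⟩
  have hprod := hζ.prod_one_sub_pow_eq_order
  have hassoc : ∀ k ∈ Finset.range n, Associated (1 - ζ ^ (k + 1)) (ζ - 1) := by
    intro k hk
    rw [Finset.mem_range] at hk
    have hcop : Nat.Coprime (k + 1) (n + 1) :=
      (hp.coprime_iff_not_dvd.mpr (Nat.not_dvd_of_pos_of_lt (Nat.succ_pos k)
        (by omega))).symm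
    refine associated_of_dvd_dvd ?_ ?_
    · -- 1 - ζ^(k+1) ∣ ζ - 1
      obtain ⟨i, -, hi⟩ := Nat.exists_mul_mod_eq_one_of_coprime hcop hp.one_lt
      have hpow : (ζ ^ (k + 1)) ^ i = ζ := by
        have heq : (k + 1) * i = (n + 1) * ((k + 1) * i / (n + 1)) + 1 := by
          conv_lhs => rw [← Nat.div_add_mod ((k + 1) * i) (n + 1)]
          rw [hi]
        rw [← pow_mul, heq, pow_add, pow_mul, hζ.pow_eq_one, one_pow, one_mul, pow_one]
      have hdvd : ζ ^ (k + 1) - 1 ∣ (ζ ^ (k + 1)) ^ i - 1 :=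
        ⟨∑ j ∈ Finset.range i, (ζ ^ (k + 1)) ^ j, by
          linear_combination -geom_sum_mul (ζ ^ (k + 1)) i⟩
      rw [hpow] at hdvd
      rw [show (1 - ζ ^ (k + 1)) = -(ζ ^ (k + 1) - 1) by ring, neg_dvd]
      exact hdvd
    · -- ζ - 1 ∣ 1 - ζ^(k+1)
      rw [show (1 - ζ ^ (k + 1)) = -(ζ ^ (k + 1) - 1) by ring, dvd_neg]
      exact ⟨∑ i ∈ Finset.range (k + 1), ζ ^ i, by linear_combination -geom_sum_mul ζ (k + 1)⟩
  have h1 : (((n + 1 : ℕ)) : O) = ∏ k ∈ Finset.range n, (1 - ζ ^ (k + 1)) := by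
    rw [hprod]; push_cast; ring
  have h2 : Associated (∏ k ∈ Finset.range n, (1 - ζ ^ (k + 1)))
      (∏ _k ∈ Finset.range n, (ζ - 1)) := Associated.prod _ _ _ hassoc
  simpa [h1, Finset.prod_const] using h2

end Aux



/-- Let `K/ℚ_p` be a finite extension with ramification index
`e` (computed for any maximal ideal `M` of the ring of integers, i.e. the
integral closure of `ℤ_p` in `K`).  If `p − 1` does not divide `e`, then `1` is
the only `p`-th root of unity in `K`. -/
theorem pth_root_of_unity_trivial (p : ℕ) [Fact p.Prime] (K : Type*) [Field K]
    [Algebra ℚ_[p] K] [FiniteDimensional ℚ_[p] K]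
    [Algebra ℤ_[p] K] [IsScalarTower ℤ_[p] ℚ_[p] K]
    (e : ℕ) (M : Ideal (integralClosure ℤ_[p] K)) (hM : M.IsMaximal)
    (he : Ideal.ramificationIdx'
        (Ideal.span {(p : ℤ_[p])}) M = e)
    (hdvd : ¬ (p - 1) ∣ e) :
    ∀ x : K, x ^ p = 1 → x = 1 := by
  classical
  intro x hx
  by_contra hne
  have hp : p.Prime := Fact.out
  haveI : CharZero K := charZero_of_injective_algebraMap (algebraMap ℚ_[p] K).injective
  haveI : IsDedekindDomain (integralClosure ℤ_[p] K) :=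
    integralClosure.isDedekindDomain ℤ_[p] ℚ_[p] K
  -- x is integral over ℤ_[p]
  have hxint : x ∈ integralClosure ℤ_[p] K := by
    refine ⟨Polynomial.X ^ p - Polynomial.C 1, ?_, ?_⟩
    · exact Polynomial.monic_X_pow_sub_C 1 hp.ne_zero
    · simp [hx]
  set ζ : integralClosure ℤ_[p] K := ⟨x, hxint⟩ with hζdef
  have hζp : ζ ^ p = 1 := by
    ext
    push_cast
    exact hx
  have hζ1 : ζ ≠ 1 := fun h => hne (congrArg Subtype.val h)
  have horder : orderOf ζ = p := by
    rcases hp.eq_one_or_self_of_dvd _ (orderOf_dvd_of_pow_eq_one hζp) with h | h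
    · exact absurd (orderOf_eq_one_iff.mp h) hζ1
    · exact h
  have hprim : IsPrimitiveRoot ζ p :=
    ⟨hζp, fun l hl => by rw [← horder]; exact orderOf_dvd_of_pow_eq_one hl⟩
  have key : Associated ((p : ℕ) : integralClosure ℤ_[p] K) ((ζ - 1) ^ (p - 1)) :=
    assoc_aux hp hprim
  have hpO : ((p : ℕ) : integralClosure ℤ_[p] K) ≠ 0 := by
    intro h
    have h2 : ((p : ℕ) : K) = 0 := by
      have := congrArg (Subtype.val : integralClosure ℤ_[p] K → K) h
      push_cast at this
      exact this
    exact (Nat.cast_ne_zero.mpr hp.ne_zero) h2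
  -- the map of the ideal (p)
  have hmap : Ideal.map (algebraMap ℤ_[p] (integralClosure ℤ_[p] K)) (Ideal.span {(p : ℤ_[p])})
      = Ideal.span {((p : ℕ) : integralClosure ℤ_[p] K)} := by
    rw [Ideal.map_span, Set.image_singleton, map_natCast]
  have hmap2 : Ideal.map (algebraMap ℤ_[p] (integralClosure ℤ_[p] K)) (Ideal.span {(p : ℤ_[p])})
      = (Ideal.span {ζ - 1}) ^ (p - 1) := by
    rw [hmap, Ideal.span_singleton_eq_span_singleton.mpr key, ← Ideal.span_singleton_pow]
  have he0 : e ≠ 0 := fun h => hdvd (h ▸ dvd_zero _)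
  have hmapne : Ideal.map (algebraMap ℤ_[p] (integralClosure ℤ_[p] K))
      (Ideal.span {(p : ℤ_[p])}) ≠ ⊥ := by
    rw [hmap, Ne, Ideal.span_singleton_eq_bot]
    exact hpO
  have hM0 : M ≠ ⊥ := by
    rintro rfl
    apply he0
    rw [← he]
    apply Ideal.ramificationIdx'_of_not_le
    rw [le_bot_iff]
    exact hmapne
  rw [← he] at hdvd
  apply hdvd
  rw [Ideal.IsDedekindDomain.ramificationIdx'_eq_normalizedFactors_count hmapne hM.isPrime hM0,
    hmap2, UniqueFactorizationMonoid.normalizedFactors_pow, Multiset.count_nsmul]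
  exact Dvd.intro _ rfl
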